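/- arXiv:1304.7332 — 2 statements merged into one kernel-verified Lean document; each statement's English description precedes it below -/
import Mathlib

section
/- Let k be a natural number. A noetherian ring A has property (C_k) if and only if A_P is almost Cohen-Macaulay for every prime P with depth(A_P) ≤ k − 2. -/
open IsLocalRing

/-- The `I`-depth (grade) of an `A`-module `M`: the supremum of lengths of
`M`-regular sequences with entries in `I`. -/
noncomputable def idealDepth {A : Type*} [CommRing A] (I : Ideal A)
    (M : Type*) [AddCommGroup M] [Module A M] : ℕ∞ :=
  sSup {n : ℕ∞ | ∃ rs : List A, (rs.length : ℕ∞) = n ∧ (∀ r ∈ rs, r ∈ I) ∧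
    RingTheory.Sequence.IsRegular M rs}

/-- The depth of a local ring: the depth with respect to its maximal ideal. -/
noncomputable def ringDepth (A : Type*) [CommRing A] [IsLocalRing A] : ℕ∞ :=
  idealDepth (IsLocalRing.maximalIdeal A) A

/-- depth(A_P), the depth of the localization of `A` at the prime `P`. -/
noncomputable def localDepth {A : Type*} [CommRing A] (P : Ideal A) [P.IsPrime] : ℕ∞ :=
  ringDepth (Localization.AtPrime P)

/-- The height of a prime ideal. -/
noncomputable def primeHeight {A : Type*} [CommRing A] (P : Ideal A) [P.IsPrime] : ℕ∞ :=
  Order.height (⟨P, inferInstance⟩ : PrimeSpectrum A)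

/-- A noetherian local ring is almost Cohen-Macaulay if `dim A ≤ 1 + depth A`. -/
def IsAlmostCM (A : Type*) [CommRing A] [IsLocalRing A] : Prop :=
  ringKrullDim A ≤ ((1 + ringDepth A : ℕ∞) : WithBot ℕ∞)

/-- Almost Cohen-Macaulay for a (local) ring presented with an explicit maximal ideal `I`:
`dim R ≤ 1 + depth_I R`. -/
def IsAlmostCMWith (R : Type*) [CommRing R] (I : Ideal R) : Prop :=
  ringKrullDim R ≤ ((1 + idealDepth I R : ℕ∞) : WithBot ℕ∞)

/-- A ring is almost Cohen-Macaulay (Han/Kang) if `depth_P A = depth (A_P)` for all primes. -/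
def IsACM (A : Type*) [CommRing A] : Prop :=
  ∀ (P : Ideal A) [P.IsPrime], idealDepth P A = localDepth P

/-- Serre's condition `(S_k)`: `depth A_P ≥ min (ht P, k)` for all primes `P`. -/
def SerreCond (k : ℕ) (A : Type*) [CommRing A] : Prop :=
  ∀ (P : Ideal A) [P.IsPrime], min (primeHeight P) (k : ℕ∞) ≤ localDepth P

/-- The condition `(C_k)`: `depth A_P ≥ min (ht P, k) - 1` for all primes `P`. -/
def CondC (k : ℕ) (A : Type*) [CommRing A] : Prop :=
  ∀ (P : Ideal A) [P.IsPrime], min (primeHeight P) (k : ℕ∞) ≤ 1 + localDepth P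

lemma krullDim_Iic {α : Type*} [PartialOrder α] (a : α) :
    Order.krullDim (Set.Iic a) = (Order.height a : WithBot ℕ∞) := by
  apply le_antisymm
  · rw [Order.krullDim]
    apply iSup_le
    intro p
    have hlast : (p.map Subtype.val (fun _ _ h => h)).last ≤ a := p.last.2
    have h2 := Order.length_le_height hlast
    exact_mod_cast h2
  · have hne : Order.krullDim (Set.Iic a) ≠ ⊥ := by
      have : Nonempty (Set.Iic a) := ⟨⟨a, le_refl a⟩⟩
      have h0 := Order.krullDim_nonneg (α := Set.Iic a)
      intro h
      rw [h] at h0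
      simp at h0
    obtain ⟨m, hm⟩ := WithBot.ne_bot_iff_exists.mp hne
    rw [← hm, WithBot.coe_le_coe]
    apply Order.height_le_iff.mpr
    intro p hp
    let q : LTSeries (Set.Iic a) :=
      ⟨p.length, fun i => ⟨p.toFun i, le_trans (p.monotone (Fin.le_last i)) hp⟩,
        fun i => p.step i⟩
    have key : ((q.length : ℕ∞) : WithBot ℕ∞) ≤ Order.krullDim (Set.Iic a) :=
      Order.LTSeries.length_le_krullDim q
    rw [← hm] at key
    exact_mod_cast key

/-- The order isomorphism between primes of `A_P` and primes of `A` below `P`. -/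
noncomputable def primeSpectrumLocalizationIso {A : Type*} [CommRing A] (P : Ideal A)
    [P.IsPrime] :
    PrimeSpectrum (Localization.AtPrime P) ≃o
      Set.Iic (⟨P, inferInstance⟩ : PrimeSpectrum A) := by
  let e := IsLocalization.AtPrime.orderIsoOfPrime (Localization.AtPrime P) P
  exact
    { toFun := fun x => ⟨⟨(e ⟨x.asIdeal, x.2⟩).1, (e ⟨x.asIdeal, x.2⟩).2.1⟩,
        (e ⟨x.asIdeal, x.2⟩).2.2⟩
      invFun := fun y => ⟨(e.symm ⟨y.1.asIdeal, y.1.2, y.2⟩).1,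
        (e.symm ⟨y.1.asIdeal, y.1.2, y.2⟩).2⟩
      left_inv := fun x => PrimeSpectrum.ext
        (congrArg Subtype.val (e.symm_apply_apply ⟨x.asIdeal, x.2⟩))
      right_inv := fun y => Subtype.ext (PrimeSpectrum.ext
        (congrArg Subtype.val (e.apply_symm_apply ⟨y.1.asIdeal, y.1.2, y.2⟩)))
      map_rel_iff' := by
        intro x y
        exact e.le_iff_le (x := ⟨x.asIdeal, x.2⟩) (y := ⟨y.asIdeal, y.2⟩) }

lemma ringKrullDim_localization_eq_primeHeight {A : Type*} [CommRing A] (P : Ideal A)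
    [P.IsPrime] :
    ringKrullDim (Localization.AtPrime P) = (primeHeight P : WithBot ℕ∞) := by
  rw [ringKrullDim, Order.krullDim_eq_of_orderIso (primeSpectrumLocalizationIso P),
    krullDim_Iic, primeHeight]

theorem condC_iff_localization_almostCM {A : Type*} [CommRing A] [IsNoetherianRing A] (k : ℕ) :
    CondC k A ↔
      ∀ (P : Ideal A) [P.IsPrime],
        localDepth P + 2 ≤ (k : ℕ∞) → IsAlmostCM (Localization.AtPrime P) := by
  constructor
  · intro hC P _ hk
    have hCP := hC P
    rw [IsAlmostCM, ringKrullDim_localization_eq_primeHeight P]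
    have : ringDepth (Localization.AtPrime P) = localDepth P := rfl
    rw [this]
    rw [WithBot.coe_le_coe]
    by_cases hhk : primeHeight P ≤ (k : ℕ∞)
    · calc primeHeight P = min (primeHeight P) (k : ℕ∞) := (min_eq_left hhk).symm
        _ ≤ 1 + localDepth P := hCP
    · exfalso
      have hmin : min (primeHeight P) (k : ℕ∞) = (k : ℕ∞) :=
        min_eq_right (le_of_not_ge hhk)
      rw [hmin] at hCP
      -- localDepth P + 2 ≤ k ≤ 1 + localDepth P, contradiction
      have hne : localDepth P ≠ ⊤ := by
        intro h
        rw [h] at hk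
        simp only [top_add, top_le_iff] at hk
        exact hhk (hk ▸ le_top)
      lift localDepth P to ℕ using hne with n
      have h1 : (n : ℕ∞) + 2 ≤ (k : ℕ∞) := hk
      have h2 : (k : ℕ∞) ≤ 1 + (n : ℕ∞) := hCP
      have : (n : ℕ∞) + 2 ≤ 1 + (n : ℕ∞) := le_trans h1 h2
      have : n + 2 ≤ 1 + n := by exact_mod_cast this
      omega
  · intro hACM P _
    by_cases hd : localDepth P + 2 ≤ (k : ℕ∞)
    · have := hACM P hd
      rw [IsAlmostCM, ringKrullDim_localization_eq_primeHeight P] at this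
      have heq : ringDepth (Localization.AtPrime P) = localDepth P := rfl
      rw [heq, WithBot.coe_le_coe] at this
      exact le_trans (min_le_left _ _) this
    · by_cases hne : localDepth P = ⊤
      · rw [hne]
        simp
      · lift localDepth P to ℕ using hne with n
        have : ¬ ((n : ℕ∞) + 2 ≤ (k : ℕ∞)) := hd
        have hk' : k < n + 2 := by
          by_contra h
          exact this (by exact_mod_cast Nat.le_of_not_lt (by omega))
        have : (k : ℕ∞) ≤ 1 + (n : ℕ∞) := by exact_mod_cast (by omega : k ≤ 1 + n)
        exact le_trans (min_le_right _ _) this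
end

section
/- Let k be a field and A = k[[X,Y]]/(X², XY). Then A has property (C_2) but does not satisfy Serre's condition (S_2). -/
open IsLocalRing

open MvPowerSeries

namespace CondCAux

variable (k : Type*) [Field k]

local notation "σ" => Fin 2

lemma fin2_eq_single (d : σ →₀ ℕ) (h0 : d 0 = 0) : d = Finsupp.single 1 (d 1) := by
  ext i
  fin_cases i
  · simpa using h0
  · simp

variable {k}

/-- The "pure Y" part of a power series. -/
noncomputable def pY (f : MvPowerSeries σ k) : MvPowerSeries σ k :=
  fun d => if d 0 = 0 then f d else 0

lemma coeff_pY (f : MvPowerSeries σ k) (d : σ →₀ ℕ) :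
    coeff d (pY f) = if d 0 = 0 then coeff d f else 0 := rfl

lemma X_dvd_sub_pY (f : MvPowerSeries σ k) : (X 0 : MvPowerSeries σ k) ∣ f - pY f := by
  rw [X_dvd_iff]
  intro m hm
  rw [map_sub, coeff_pY, if_pos hm, sub_self]

lemma decomp (f : MvPowerSeries σ k) (hf : constantCoeff f = 0) :
    ∃ g h : MvPowerSeries σ k, f = X 0 * g + X 1 * h := by
  obtain ⟨g, hg⟩ := X_dvd_sub_pY f
  have hY : (X 1 : MvPowerSeries σ k) ∣ pY f := by
    rw [X_dvd_iff]
    intro m hm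
    rw [coeff_pY]
    split_ifs with h0
    · have : m = 0 := by
        ext i; fin_cases i
        · simpa using h0
        · simpa using hm
      rw [this, coeff_zero_eq_constantCoeff_apply, hf]
    · rfl
  obtain ⟨h, hh⟩ := hY
  exact ⟨g, h, by rw [← hg, ← hh]; ring⟩



local notation "II" => (Ideal.span {X (0 : σ) ^ 2, X (0 : σ) * X (1 : σ)} : Ideal (MvPowerSeries σ k))

lemma coeff_single01_of_mem {w : MvPowerSeries σ k} (hw : w ∈ II) :
    coeff (Finsupp.single 0 1) w = 0 := by
  obtain ⟨a, b, hab⟩ := Ideal.mem_span_pair.mp hw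
  have h1 : coeff (Finsupp.single 0 1) (a * X 0 ^ 2) = 0 := by
    refine X_pow_dvd_iff.mp ⟨a, mul_comm _ _⟩ _ ?_
    simp
  have h2 : coeff (Finsupp.single 0 1) (b * (X 0 * X 1)) = 0 := by
    refine (X_dvd_iff (s := (1 : σ))).mp ⟨b * X 0, by ring⟩ _ ?_
    simp [Finsupp.single_apply]
  rw [← hab, map_add, h1, h2, add_zero]

lemma X_not_mem : (X (0 : σ) : MvPowerSeries σ k) ∉ II := by
  intro h
  have := coeff_single01_of_mem h
  rw [coeff_X, if_pos rfl] at this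
  exact one_ne_zero this

lemma X_mul_mem (f : MvPowerSeries σ k) (hf : constantCoeff f = 0) :
    X (0 : σ) * f ∈ II := by
  obtain ⟨g, h, rfl⟩ := decomp f hf
  exact Ideal.mem_span_pair.mpr ⟨g, h, by ring⟩

lemma not_isUnit_iff (f : MvPowerSeries σ k) : ¬ IsUnit f ↔ constantCoeff f = 0 := by
  rw [MvPowerSeries.isUnit_iff_constantCoeff, isUnit_iff_ne_zero, not_ne_iff]

lemma constantCoeff_eq_zero_of_mem {w : MvPowerSeries σ k} (hw : w ∈ II) :
    constantCoeff w = 0 := by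
  obtain ⟨a, b, hab⟩ := Ideal.mem_span_pair.mp hw
  rw [← hab]
  simp

lemma II_ne_top : II ≠ ⊤ := by
  intro h
  have : constantCoeff (1 : MvPowerSeries σ k) = 0 := constantCoeff_eq_zero_of_mem (h ▸ Submodule.mem_top)
  simp at this

lemma Y_not_mem_radical : (X (1 : σ) : MvPowerSeries σ k) ∉ Ideal.radical II := by
  rintro ⟨n, hn⟩
  obtain ⟨a, b, hab⟩ := Ideal.mem_span_pair.mp hn
  have h0 : coeff (Finsupp.single 1 n) (X (1:σ) ^ n : MvPowerSeries σ k) = 1 := by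
    rw [coeff_X_pow, if_pos rfl]
  have h1 : (X (0:σ) : MvPowerSeries σ k) ∣ X 1 ^ n := by
    rw [← hab]
    exact dvd_add (Dvd.dvd.mul_left (dvd_pow_self _ two_ne_zero) a)
      ⟨b * X 1, by ring⟩
  have := X_dvd_iff.mp h1 (Finsupp.single 1 n) (by simp)
  rw [h0] at this
  exact one_ne_zero this




lemma coeff_Ypow_mul (n : ℕ) (u : MvPowerSeries σ k) :
    coeff (Finsupp.single 1 n) (X (1:σ) ^ n * u) = constantCoeff u := by
  classical
  rw [coeff_mul, Finset.sum_eq_single (Finsupp.single 1 n, 0)]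
  · rw [coeff_X_pow, if_pos rfl, one_mul, coeff_zero_eq_constantCoeff_apply]
  · rintro ⟨i, j⟩ hij hne
    rw [Finset.HasAntidiagonal.mem_antidiagonal] at hij
    rw [coeff_X_pow, if_neg, zero_mul]
    intro hi
    apply hne
    dsimp only at hij ⊢
    subst hi
    rw [add_eq_left.mp hij]
  · intro h
    exact absurd (Finset.HasAntidiagonal.mem_antidiagonal.mpr (add_zero _)) h

lemma coeff_single_pY (f : MvPowerSeries σ k) (t : ℕ) :
    coeff (Finsupp.single 1 t) (pY f) = coeff (Finsupp.single 1 t) f := by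
  rw [coeff_pY, if_pos (by simp [Finsupp.single_apply])]

/-- Classification: any prime of `k[[X,Y]]` containing `X` is the maximal ideal or
equals `span {X}`. -/
lemma prime_classification (Q : Ideal (MvPowerSeries σ k)) (hQ : Q.IsPrime)
    (hX : (X (0:σ) : MvPowerSeries σ k) ∈ Q) :
    Q = maximalIdeal (MvPowerSeries σ k) ∨ Q = Ideal.span {(X (0:σ) : MvPowerSeries σ k)} := by
  by_cases hY : (X (1:σ) : MvPowerSeries σ k) ∈ Q
  · left
    refine le_antisymm (IsLocalRing.le_maximalIdeal hQ.ne_top) ?_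
    intro f hf
    have hf0 : constantCoeff f = 0 := (not_isUnit_iff f).mp hf
    obtain ⟨g, h, rfl⟩ := decomp f hf0
    exact Ideal.add_mem _ (Ideal.mul_mem_right _ _ hX) (Ideal.mul_mem_right _ _ hY)
  · right
    refine le_antisymm ?_ ((Ideal.span_singleton_le_iff_mem _).mpr hX)
    intro f hf
    obtain ⟨c, hc⟩ := X_dvd_sub_pY f
    have hsub : f - pY f ∈ Q := hc ▸ Ideal.mul_mem_right _ _ hX
    have hpY : pY f ∈ Q := by
      have h' : pY f = f - (f - pY f) := by ring
      rw [h']; exact Ideal.sub_mem _ hf hsub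
    by_cases hf0 : pY f = 0
    · rw [Ideal.mem_span_singleton]
      have h' : f = f - pY f := by rw [hf0, sub_zero]
      rw [h']; exact ⟨c, hc⟩
    · exfalso
      apply hY
      have hex : ∃ n, coeff (Finsupp.single 1 n) (pY f) ≠ 0 := by
        by_contra hall
        push_neg at hall
        apply hf0
        ext d
        rw [map_zero]
        by_cases h0 : d 0 = 0
        · rw [show d = Finsupp.single 1 (d 1) from fin2_eq_single d h0]
          exact hall (d 1)
        · rw [coeff_pY, if_neg h0]
      classical
      obtain ⟨n, hmin, hleast⟩ : ∃ n, coeff (Finsupp.single 1 n) (pY f) ≠ 0 ∧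
          ∀ m < n, coeff (Finsupp.single 1 m) (pY f) = 0 :=
        ⟨Nat.find hex, Nat.find_spec hex, fun m hm => not_not.mp (Nat.find_min hex hm)⟩
      have hdvd : (X (1:σ) : MvPowerSeries σ k) ^ n ∣ pY f := by
        rw [X_pow_dvd_iff]
        intro m hm
        by_cases h0 : m 0 = 0
        · rw [show m = Finsupp.single 1 (m 1) from fin2_eq_single m h0]
          exact hleast (m 1) hm
        · rw [coeff_pY, if_neg h0]
      obtain ⟨u, hu⟩ := hdvd
      have hunit : IsUnit u := by
        rw [MvPowerSeries.isUnit_iff_constantCoeff, isUnit_iff_ne_zero]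
        intro h0
        apply hmin
        rw [hu, coeff_Ypow_mul, h0]
      have hQn : (X (1:σ) : MvPowerSeries σ k) ^ n ∈ Q := by
        rcases hQ.mem_or_mem (hu ▸ hpY) with h | h
        · exact h
        · exact absurd (Q.eq_top_of_isUnit_mem h hunit) hQ.ne_top
      exact hQ.mem_of_pow_mem n hQn


section Quotient

local notation "AA" => (MvPowerSeries σ k ⧸ (Ideal.span {X (0 : σ) ^ 2, X (0 : σ) * X (1 : σ)} : Ideal (MvPowerSeries σ k)))

instance : Nontrivial AA := Ideal.Quotient.nontrivial_iff.mpr II_ne_top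

instance : IsLocalRing AA :=
  IsLocalRing.of_surjective' (Ideal.Quotient.mk II) Ideal.Quotient.mk_surjective

lemma mkX_ne_zero : (Ideal.Quotient.mk II (X (0:σ)) : AA) ≠ 0 := by
  rw [Ne, Ideal.Quotient.eq_zero_iff_mem]
  exact X_not_mem

lemma mul_mkX_eq_zero (a : AA) (ha : a ∈ maximalIdeal AA) :
    a * Ideal.Quotient.mk II (X (0:σ)) = 0 := by
  obtain ⟨f, rfl⟩ := Ideal.Quotient.mk_surjective a
  have hnu : ¬ IsUnit f := fun h => ha ((RingHom.isUnit_map _ h))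
  rw [← map_mul, mul_comm f (X (0:σ)), Ideal.Quotient.eq_zero_iff_mem]
  exact X_mul_mem f ((not_isUnit_iff f).mp hnu)

lemma comap_classification (y : PrimeSpectrum AA) :
    Ideal.comap (Ideal.Quotient.mk II) y.asIdeal = maximalIdeal (MvPowerSeries σ k) ∨
    Ideal.comap (Ideal.Quotient.mk II) y.asIdeal
      = Ideal.span {(X (0:σ) : MvPowerSeries σ k)} := by
  have hprime : (Ideal.comap (Ideal.Quotient.mk II) y.asIdeal).IsPrime :=
    y.isPrime.comap _
  refine prime_classification _ hprime (hprime.mem_of_pow_mem 2 ?_)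
  rw [Ideal.mem_comap, map_pow]
  have : (Ideal.Quotient.mk II (X (0:σ)))^2 = 0 := by
    rw [← map_pow, Ideal.Quotient.eq_zero_iff_mem]
    exact Ideal.subset_span (Set.mem_insert _ _)
  rw [this]
  exact y.asIdeal.zero_mem

lemma height_le_one (x : PrimeSpectrum AA) : Order.height x ≤ 1 := by
  apply Order.height_le
  intro p _
  by_contra hgt
  push_neg at hgt
  have hlen : 1 < p.length := by exact_mod_cast hgt
  have hinj : ∀ y z : PrimeSpectrum AA,
      Ideal.comap (Ideal.Quotient.mk II) y.asIdeal
        = Ideal.comap (Ideal.Quotient.mk II) z.asIdeal → y = z := by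
    intro y z h
    ext1
    rw [← Ideal.map_comap_of_surjective _ Ideal.Quotient.mk_surjective y.asIdeal,
      ← Ideal.map_comap_of_surjective _ Ideal.Quotient.mk_surjective z.asIdeal]
    exact congrArg _ h
  have hsm : ∀ y z : PrimeSpectrum AA, y < z →
      Ideal.comap (Ideal.Quotient.mk II) y.asIdeal
        < Ideal.comap (Ideal.Quotient.mk II) z.asIdeal := by
    intro y z h
    exact lt_of_le_of_ne (Ideal.comap_mono (le_of_lt h)) (fun he => h.ne (hinj _ _ he))
  set a := p.toFun ⟨0, by omega⟩
  set b := p.toFun ⟨1, by omega⟩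
  set c := p.toFun ⟨2, by omega⟩
  have hab := hsm a b (p.strictMono (by simp [Fin.lt_def]))
  have hbc := hsm b c (p.strictMono (by simp [Fin.lt_def]))
  have habc := hab.trans hbc
  rcases comap_classification a with ha | ha <;>
    rcases comap_classification b with hb | hb <;>
      rcases comap_classification c with hc | hc
  all_goals first
    | (rw [ha, hb] at hab; exact lt_irrefl _ hab)
    | (rw [hb, hc] at hbc; exact lt_irrefl _ hbc)
    | (rw [ha, hc] at habc; exact lt_irrefl _ habc)


lemma exists_prime_avoiding_Y :
    ∃ Q : Ideal (MvPowerSeries σ k), (II ≤ Q ∧ Q.IsPrime) ∧ (X (1:σ) : MvPowerSeries σ k) ∉ Q := by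
  have h := Y_not_mem_radical (k := k)
  rw [Ideal.radical_eq_sInf, Submodule.mem_sInf] at h
  push_neg at h
  obtain ⟨Q, hQ, hY⟩ := h
  exact ⟨Q, hQ, hY⟩

lemma mkY_nonunit : ¬ IsUnit (Ideal.Quotient.mk II (X (1:σ)) : AA) := by
  intro h
  have hker : ∀ w ∈ II, constantCoeff w = 0 := fun w hw => constantCoeff_eq_zero_of_mem hw
  let ε : AA →+* k := Ideal.Quotient.lift II (constantCoeff) hker
  have := h.map ε
  rw [show ε (Ideal.Quotient.mk II (X (1:σ))) = 0 by
    simp [ε, Ideal.Quotient.lift_mk, constantCoeff_X]] at this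
  exact not_isUnit_zero this

lemma one_le_height_max :
    (1 : ℕ∞) ≤ Order.height (⟨maximalIdeal AA, inferInstance⟩ : PrimeSpectrum AA) := by
  obtain ⟨Qp, ⟨hle, hprime⟩, hY⟩ := exists_prime_avoiding_Y (k := k)
  have hker : RingHom.ker (Ideal.Quotient.mk II) ≤ Qp := by
    rw [Ideal.mk_ker]; exact hle
  haveI hpA : (Ideal.map (Ideal.Quotient.mk II) Qp).IsPrime :=
    Ideal.map_isPrime_of_surjective Ideal.Quotient.mk_surjective hker
  have hYnot : (Ideal.Quotient.mk II (X (1:σ)) : AA) ∉ Ideal.map (Ideal.Quotient.mk II) Qp := by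
    intro hmem
    apply hY
    have hc : Ideal.comap (Ideal.Quotient.mk II) (Ideal.map (Ideal.Quotient.mk II) Qp)
        = Qp := by
      rw [Ideal.comap_map_of_surjective _ Ideal.Quotient.mk_surjective,
        ← RingHom.ker_eq_comap_bot, Ideal.mk_ker]
      exact sup_eq_left.mpr hle
    rw [← hc]
    exact hmem
  have hlt : (⟨Ideal.map (Ideal.Quotient.mk II) Qp, hpA⟩ : PrimeSpectrum AA)
      < ⟨maximalIdeal AA, inferInstance⟩ := by
    rw [← PrimeSpectrum.asIdeal_lt_asIdeal]
    show Ideal.map (Ideal.Quotient.mk II) Qp < maximalIdeal AA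
    refine lt_of_le_of_ne (IsLocalRing.le_maximalIdeal hpA.ne_top) ?_
    intro h
    apply hYnot
    rw [h]
    exact (IsLocalRing.mem_maximalIdeal _).mpr mkY_nonunit
  have hnmin : ¬ IsMin (⟨maximalIdeal AA, inferInstance⟩ : PrimeSpectrum AA) :=
    fun hm => absurd (hm hlt.le) (not_le_of_gt hlt)
  exact ENat.one_le_iff_ne_zero.mpr (fun h0 => hnmin (Order.height_eq_zero.mp h0))

set_option maxHeartbeats 1000000 in
set_option synthInstance.maxHeartbeats 400000 in
lemma localDepth_max_eq_zero : localDepth (maximalIdeal AA) = 0 := by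
  set L := Localization.AtPrime (maximalIdeal AA)
  rw [localDepth, ringDepth, idealDepth]
  refine le_antisymm (sSup_le ?_) (zero_le)
  rintro n ⟨rs, rfl, hmem, hreg⟩
  match rs, hmem, hreg with
  | [], _, _ => simp
  | r :: tl, hmem, hreg =>
    exfalso
    have hr : IsSMulRegular L r :=
      ((RingTheory.Sequence.isRegular_cons_iff (R := L) L r tl).mp hreg).1
    have hr_mem : r ∈ maximalIdeal L := hmem r List.mem_cons_self
    set z := algebraMap AA L (Ideal.Quotient.mk II (X (0:σ))) with hzdef
    have hz : z ≠ 0 := by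
      intro h
      obtain ⟨s, hs⟩ := (IsLocalization.map_eq_zero_iff (maximalIdeal AA).primeCompl L _).mp h
      have hu_s : IsUnit (s : AA) := by
        by_contra hns
        exact s.2 ((IsLocalRing.mem_maximalIdeal _).mpr hns)
      exact mkX_ne_zero ((IsUnit.mul_right_eq_zero hu_s).mp hs)
    obtain ⟨⟨a, s⟩, hr_eq⟩ := IsLocalization.surj (M := (maximalIdeal AA).primeCompl) r
    have hu_s : IsUnit (algebraMap AA L (s : AA)) :=
      IsLocalization.map_units L s
    have ha : a ∈ maximalIdeal AA := by
      by_contra hna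
      have hu_a : IsUnit a := by
        by_contra h'
        exact hna ((IsLocalRing.mem_maximalIdeal _).mpr h')
      exact (IsLocalRing.mem_maximalIdeal _).mp hr_mem
        (isUnit_of_mul_isUnit_left (hr_eq ▸ hu_a.map (algebraMap AA L)))
    have hax : (a : AA) * Ideal.Quotient.mk II (X (0:σ)) = 0 := mul_mkX_eq_zero a ha
    have hrz : r * z = 0 := by
      have h1 : (r * z) * algebraMap AA L (s : AA) = 0 := by
        calc (r * z) * algebraMap AA L (s : AA)
            = (r * algebraMap AA L (s : AA)) * z := by ring
          _ = algebraMap AA L a * z := by rw [hr_eq]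
          _ = algebraMap AA L ((a : AA) * Ideal.Quotient.mk II (X (0:σ))) := by
              rw [map_mul, hzdef]
          _ = 0 := by rw [hax, map_zero]
      exact (IsUnit.mul_left_eq_zero hu_s).mp h1
    apply hz
    apply hr
    show r • z = r • (0 : L)
    rw [smul_eq_mul, smul_eq_mul, hrz, mul_zero]

end Quotient

end CondCAux

open CondCAux in
theorem condC_two_not_serre_two {k : Type*} [Field k] :
    CondC 2 (MvPowerSeries (Fin 2) k ⧸
      (Ideal.span {MvPowerSeries.X (0 : Fin 2) ^ 2,
        MvPowerSeries.X (0 : Fin 2) * MvPowerSeries.X (1 : Fin 2)} :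
          Ideal (MvPowerSeries (Fin 2) k))) ∧
    ¬ SerreCond 2 (MvPowerSeries (Fin 2) k ⧸
      (Ideal.span {MvPowerSeries.X (0 : Fin 2) ^ 2,
        MvPowerSeries.X (0 : Fin 2) * MvPowerSeries.X (1 : Fin 2)} :
          Ideal (MvPowerSeries (Fin 2) k))) := by
  constructor
  · intro P instP
    refine le_trans (min_le_left _ _) (le_trans ?_ le_self_add)
    exact height_le_one ⟨P, inferInstance⟩
  · intro hS
    have h := hS (IsLocalRing.maximalIdeal _)
    rw [localDepth_max_eq_zero] at h
    have hone : (1 : ℕ∞) ≤ min (primeHeight (IsLocalRing.maximalIdeal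
        (MvPowerSeries (Fin 2) k ⧸
          (Ideal.span {MvPowerSeries.X (0 : Fin 2) ^ 2,
            MvPowerSeries.X (0 : Fin 2) * MvPowerSeries.X (1 : Fin 2)} :
              Ideal (MvPowerSeries (Fin 2) k))))) 2 :=
      le_min one_le_height_max (by norm_num)
    have := le_trans hone h
    simp at this
end
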